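/- Let f : Q → S be a continuous surjection between compact Hausdorff spaces and let d : Q × Q → ℝ be a lower semicontinuous map that fragments Q. Define d̂(x,y) = inf{ d(u,v) : f(u) = x, f(v) = y }. Then d̂ fragments S. -/

import Mathlib

open Set

/-- `d` fragments a topological space `X`: every nonempty closed subset has a nonempty
relatively open subset of `d`-diameter less than `ε`, for each `ε > 0`. -/
def Fragments {X : Type*} [TopologicalSpace X] (d : X → X → ℝ) : Prop :=
  ∀ ε > (0 : ℝ), ∀ L : Set X, L.Nonempty → IsClosed L →
    ∃ U : Set X, IsOpen U ∧ (L ∩ U).Nonempty ∧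
      ∀ x ∈ L ∩ U, ∀ y ∈ L ∩ U, d x y < ε

theorem stmt2 {Q S : Type*} [TopologicalSpace Q] [CompactSpace Q] [T2Space Q]
    [TopologicalSpace S] [CompactSpace S] [T2Space S]
    (f : Q → S) (hf : Continuous f) (hsurj : Function.Surjective f)
    (d : Q → Q → ℝ)
    (hlsc : LowerSemicontinuous (fun p : Q × Q => d p.1 p.2))
    (hfrag : Fragments d) :
    Fragments (fun x y : S => sInf {r : ℝ | ∃ u v : Q, f u = x ∧ f v = y ∧ r = d u v}) := by
  intro ε hε L hLne hLcl
  -- the family of closed subsets of `f ⁻¹' L` mapping onto `L`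
  set 𝒮 : Set (Set Q) := {K | IsClosed K ∧ f '' K = L} with h𝒮
  have hmem : f ⁻¹' L ∈ 𝒮 := by
    refine ⟨hLcl.preimage hf, ?_⟩
    apply Subset.antisymm (image_preimage_subset f L)
    intro x hx
    obtain ⟨u, hu⟩ := hsurj x
    exact ⟨u, by simpa [hu] using hx, hu⟩
  -- Zorn's lemma: a minimal member of 𝒮
  have hzorn : ∀ c ⊆ 𝒮, IsChain (· ⊆ ·) c → c.Nonempty → ∃ lb ∈ 𝒮, ∀ s ∈ c, lb ⊆ s := by
    intro c hc hchain hcne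
    refine ⟨⋂₀ c, ⟨isClosed_sInter fun K hK => (hc hK).1, ?_⟩, fun s hs => sInter_subset_of_mem hs⟩
    apply Subset.antisymm
    · obtain ⟨K₀, hK₀⟩ := hcne
      calc f '' ⋂₀ c ⊆ f '' K₀ := image_mono (f := f) (sInter_subset_of_mem hK₀)
        _ = L := (hc hK₀).2
    · intro x hx
      -- fibers over x within the chain
      have hfib : (⋂₀ ((fun K => K ∩ f ⁻¹' {x}) '' c)).Nonempty := by
        have : Nonempty ((fun K => K ∩ f ⁻¹' {x}) '' c) := by
          obtain ⟨K₀, hK₀⟩ := hcne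
          exact ⟨⟨_, mem_image_of_mem _ hK₀⟩⟩
        apply IsCompact.nonempty_sInter_of_directed_nonempty_isCompact_isClosed
        · rintro _ ⟨K₁, hK₁, rfl⟩ _ ⟨K₂, hK₂, rfl⟩
          rcases hchain.total hK₁ hK₂ with h | h
          · exact ⟨_, mem_image_of_mem _ hK₁, Subset.rfl,
              inter_subset_inter_left _ h⟩
          · exact ⟨_, mem_image_of_mem _ hK₂, inter_subset_inter_left _ h, Subset.rfl⟩
        · rintro _ ⟨K₁, hK₁, rfl⟩
          have : x ∈ f '' K₁ := (hc hK₁).2 ▸ hx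
          obtain ⟨u, hu, hux⟩ := this
          exact ⟨u, hu, by simpa using hux⟩
        · rintro _ ⟨K₁, hK₁, rfl⟩
          exact (((hc hK₁).1.inter ((isClosed_singleton).preimage hf))).isCompact
        · rintro _ ⟨K₁, hK₁, rfl⟩
          exact (hc hK₁).1.inter ((isClosed_singleton).preimage hf)
      obtain ⟨u, hu⟩ := hfib
      refine ⟨u, ?_, ?_⟩
      · intro K hK
        have := hu _ (mem_image_of_mem _ hK)
        exact this.1
      · obtain ⟨K₀, hK₀⟩ := hcne
        have := hu _ (mem_image_of_mem _ hK₀)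
        simpa using this.2
  obtain ⟨K, -, hK𝒮, hKmin⟩ := zorn_superset_nonempty 𝒮 hzorn _ hmem
  obtain ⟨hKcl, hKim⟩ := hK𝒮
  have hKne : K.Nonempty := by
    obtain ⟨x, hx⟩ := hLne
    obtain ⟨u, hu, -⟩ := hKim ▸ hx
    exact ⟨u, hu⟩
  -- fragment K
  obtain ⟨W, hWopen, hKWne, hKWdiam⟩ := hfrag ε hε K hKne hKcl
  -- the open set in S
  set C : Set Q := K \ W with hC
  have hCcl : IsClosed C := hKcl.sdiff hWopen
  have hfC_cl : IsClosed (f '' C) := (hCcl.isCompact.image hf).isClosed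
  have hfC_ne : f '' C ≠ L := by
    intro h
    have hCK : C ⊆ K := diff_subset
    have : C = K := Subset.antisymm hCK (hKmin ⟨hCcl, h⟩ hCK)
    obtain ⟨u, huK, huW⟩ := hKWne
    have : u ∈ C := this ▸ huK
    exact this.2 huW
  refine ⟨(f '' C)ᶜ, hfC_cl.isOpen_compl, ?_, ?_⟩
  · have hsub : f '' C ⊆ L := hKim ▸ image_mono (f := f) diff_subset
    rcases (subset_iff_ssubset_or_eq.mp hsub).resolve_right hfC_ne with h
    obtain ⟨x, hxL, hxC⟩ := exists_of_ssubset h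
    exact ⟨x, hxL, hxC⟩
  · rintro x ⟨hxL, hxU⟩ y ⟨hyL, hyU⟩
    obtain ⟨u, huK, hux⟩ := hKim ▸ hxL
    obtain ⟨v, hvK, hvy⟩ := hKim ▸ hyL
    have huW : u ∈ W := by
      by_contra h
      exact hxU ⟨u, ⟨huK, h⟩, hux⟩
    have hvW : v ∈ W := by
      by_contra h
      exact hyU ⟨v, ⟨hvK, h⟩, hvy⟩
    have hd : d u v < ε := hKWdiam u ⟨huK, huW⟩ v ⟨hvK, hvW⟩
    have hmem' : d u v ∈ {r : ℝ | ∃ u' v' : Q, f u' = x ∧ f v' = y ∧ r = d u' v'} :=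
      ⟨u, v, hux, hvy, rfl⟩
    by_cases hbdd : BddBelow {r : ℝ | ∃ u' v' : Q, f u' = x ∧ f v' = y ∧ r = d u' v'}
    · exact lt_of_le_of_lt (csInf_le hbdd hmem') hd
    · have : sInf {r : ℝ | ∃ u' v' : Q, f u' = x ∧ f v' = y ∧ r = d u' v'} = 0 :=
        Real.sInf_of_not_bddBelow hbdd
      calc sInf {r : ℝ | ∃ u' v' : Q, f u' = x ∧ f v' = y ∧ r = d u' v'} = 0 := this
        _ < ε := hε
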